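/- Let a = (−3,4)ᵀ ∈ ℝ², d = 5 ∈ ℝ, S = {(x,y) ∈ ℝ²×ℝ : ‖x‖ ≤ |y|, aᵀx + dy ≤ 0}, λ = (−4,−3)ᵀ/5, and C = {(x,y) : βy ≤ λᵀx for all β with |β| = 1 and aᵀλ + dβ ≤ 0}. Then C is not S-free: the point (3, −4, 5) belongs to S and to the interior of C. -/
import Mathlib


open RealInnerProductSpace

theorem counterexample_not_free
    (a : EuclideanSpace ℝ (Fin 2))
    (ha : a = (WithLp.equiv 2 (Fin 2 → ℝ)).symm ![(-3 : ℝ), 4])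
    (lam : EuclideanSpace ℝ (Fin 2))
    (hlam : lam = (WithLp.equiv 2 (Fin 2 → ℝ)).symm ![(-4 / 5 : ℝ), -3 / 5])
    (S C : Set (EuclideanSpace ℝ (Fin 2) × ℝ))
    (hS : S = {q | ‖q.1‖ ≤ |q.2| ∧ ⟪a, q.1⟫ + 5 * q.2 ≤ 0})
    (hC : C = {q | ∀ β : ℝ, |β| = 1 → ⟪a, lam⟫ + 5 * β ≤ 0 → β * q.2 ≤ ⟪lam, q.1⟫}) :
    ((WithLp.equiv 2 (Fin 2 → ℝ)).symm ![(3 : ℝ), -4], (5 : ℝ)) ∈ S ∧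
    ((WithLp.equiv 2 (Fin 2 → ℝ)).symm ![(3 : ℝ), -4], (5 : ℝ)) ∈ interior C := by
  subst ha hlam hS hC
  constructor
  · constructor
    · rw [EuclideanSpace.norm_eq]
      simp [Fin.sum_univ_two]
      rw [show (3:ℝ)^2 + (4:ℝ)^2 = 5^2 by norm_num, Real.sqrt_sq (by norm_num)]
    · simp [PiLp.inner_apply, Fin.sum_univ_two]
      norm_num
  · have hal : ⟪(WithLp.equiv 2 (Fin 2 → ℝ)).symm ![(-3 : ℝ), 4],
        (WithLp.equiv 2 (Fin 2 → ℝ)).symm ![(-4 / 5 : ℝ), -3 / 5]⟫ = 0 := by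
      simp [PiLp.inner_apply, Fin.sum_univ_two]
      norm_num
    set lam : EuclideanSpace ℝ (Fin 2) := (WithLp.equiv 2 (Fin 2 → ℝ)).symm ![(-4 / 5 : ℝ), -3 / 5] with hlam
    have hopen : IsOpen {q : EuclideanSpace ℝ (Fin 2) × ℝ | -q.2 < ⟪lam, q.1⟫} := by
      apply isOpen_lt
      · exact (continuous_snd.neg)
      · exact continuous_const.inner continuous_fst
    apply interior_mono (show {q : EuclideanSpace ℝ (Fin 2) × ℝ | -q.2 < ⟪lam, q.1⟫} ⊆ _ from ?_)
    · rw [hopen.interior_eq]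
      simp only [Set.mem_setOf_eq, hlam, PiLp.inner_apply]
      simp [Fin.sum_univ_two]
      norm_num
    · intro q hq β hβ hb
      rw [hal] at hb
      have hβneg : β = -1 := by
        rcases abs_eq (by norm_num : (0:ℝ) ≤ 1) |>.mp hβ with h | h
        · linarith
        · exact h
      subst hβneg
      simp only [Set.mem_setOf_eq] at hq ⊢
      linarith
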